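/- arXiv:2603.06747 — 3 statements merged into one kernel-verified Lean document; each statement's English description precedes it below -/
import Mathlib

section
/- For integers n ≥ 2 and m ≥ 2, let P_n and P_m be paths with n and m vertices respectively. Then AT(P_n +_Q P_m) = 2 if n = 2 and m = 2, and AT(P_n +_Q P_m) = 3 otherwise. -/
open scoped Classical

/-- The outdegree of a vertex `v` in a finite set of arcs `A`. -/
noncomputable def arcOutDeg {V : Type*} (A : Finset (V × V)) (v : V) : ℕ :=
  (A.filter fun a => a.1 = v).card

/-- The indegree of a vertex `v` in a finite set of arcs `A`. -/
noncomputable def arcInDeg {V : Type*} (A : Finset (V × V)) (v : V) : ℕ :=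
  (A.filter fun a => a.2 = v).card

/-- `A` is an orientation of the simple graph `G`: every arc of `A` joins adjacent
vertices, and every edge of `G` receives exactly one of its two possible directions. -/
def IsOrientation {V : Type*} (G : SimpleGraph V) (A : Finset (V × V)) : Prop :=
  (∀ a ∈ A, G.Adj a.1 a.2) ∧ ∀ u v : V, G.Adj u v → ((u, v) ∈ A ↔ (v, u) ∉ A)

/-- A set of arcs is Eulerian if at every vertex the indegree equals the outdegree. -/
def IsEulerianSub {V : Type*} (B : Finset (V × V)) : Prop :=
  ∀ v : V, arcInDeg B v = arcOutDeg B v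

/-- An orientation (given by its arc set `A`) is an Alon–Tarsi orientation if the number
of its even Eulerian sub-digraphs differs from the number of its odd Eulerian
sub-digraphs. -/
def IsATOrientation {V : Type*} (A : Finset (V × V)) : Prop :=
  (A.powerset.filter fun B => IsEulerianSub B ∧ Even B.card).card ≠
    (A.powerset.filter fun B => IsEulerianSub B ∧ ¬ Even B.card).card

/-- The Alon–Tarsi number of `G`: the least `k` such that `G` has an Alon–Tarsi
orientation with maximum outdegree at most `k - 1` (i.e. `< k`). -/
noncomputable def alonTarsiNumber {V : Type*} (G : SimpleGraph V) : ℕ :=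
  sInf {k : ℕ | ∃ A : Finset (V × V),
    IsOrientation G A ∧ IsATOrientation A ∧ ∀ v : V, arcOutDeg A v < k}

/-- A graph is `k`-degenerate if every nonempty (induced) subgraph has a vertex of
degree at most `k`. -/
def Degenerate {V : Type*} (k : ℕ) (G : SimpleGraph V) : Prop :=
  ∀ s : Finset V, s.Nonempty → ∃ v ∈ s, (s.filter fun u => G.Adj v u).card ≤ k

/-- The subdivision graph `S(G)`: each edge `uv` of `G` is replaced by a path `u-e-v`
through the new vertex `e` corresponding to `uv`. -/
def subdivisionGraph {V : Type*} (G : SimpleGraph V) : SimpleGraph (V ⊕ ↥G.edgeSet) :=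
  SimpleGraph.fromRel fun a b =>
    match a, b with
    | Sum.inl u, Sum.inr e => u ∈ (e : Sym2 V)
    | _, _ => False

/-- The graph `R(G)`: `G` together with, for each edge `uv`, a new vertex joined to
`u` and `v`. -/
def rGraph {V : Type*} (G : SimpleGraph V) : SimpleGraph (V ⊕ ↥G.edgeSet) :=
  SimpleGraph.fromRel fun a b =>
    match a, b with
    | Sum.inl u, Sum.inl v => G.Adj u v
    | Sum.inl u, Sum.inr e => u ∈ (e : Sym2 V)
    | _, _ => False

/-- The graph `Q(G)`: new vertices joined to the endpoints of their edges, and two new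
vertices joined iff the corresponding edges of `G` share an endpoint; original
vertices are pairwise nonadjacent. -/
def qGraph {V : Type*} (G : SimpleGraph V) : SimpleGraph (V ⊕ ↥G.edgeSet) :=
  SimpleGraph.fromRel fun a b =>
    match a, b with
    | Sum.inl u, Sum.inr e => u ∈ (e : Sym2 V)
    | Sum.inr e, Sum.inr f => e ≠ f ∧ ∃ u : V, u ∈ (e : Sym2 V) ∧ u ∈ (f : Sym2 V)
    | _, _ => False

/-- The total graph `T(G)`. -/
def tGraph {V : Type*} (G : SimpleGraph V) : SimpleGraph (V ⊕ ↥G.edgeSet) :=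
  SimpleGraph.fromRel fun a b =>
    match a, b with
    | Sum.inl u, Sum.inl v => G.Adj u v
    | Sum.inl u, Sum.inr e => u ∈ (e : Sym2 V)
    | Sum.inr e, Sum.inr f => e ≠ f ∧ ∃ u : V, u ∈ (e : Sym2 V) ∧ u ∈ (f : Sym2 V)
    | _, _ => False

/-- The `F`-sum construction: given a graph `K` on `V ⊕ E` (playing the role of `F(G)`,
whose "original" vertices are those of the form `Sum.inl u`) and a graph `H` on `W`,
two vertices `(u₁, u₂)` and `(v₁, v₂)` are adjacent iff either `u₁ = v₁` is an original
vertex and `u₂v₂ ∈ E(H)`, or `u₂ = v₂` and `u₁v₁ ∈ E(K)`. -/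
def fSum {V E W : Type*} (K : SimpleGraph (V ⊕ E)) (H : SimpleGraph W) :
    SimpleGraph ((V ⊕ E) × W) :=
  SimpleGraph.fromRel fun a b =>
    (a.1 = b.1 ∧ (∃ u : V, a.1 = Sum.inl u) ∧ H.Adj a.2 b.2) ∨
      (a.2 = b.2 ∧ K.Adj a.1 b.1)

/-- The `S`-sum `G +_S H`. -/
def sSum {V W : Type*} (G : SimpleGraph V) (H : SimpleGraph W) :
    SimpleGraph ((V ⊕ ↥G.edgeSet) × W) :=
  fSum (subdivisionGraph G) H

/-- The `R`-sum `G +_R H`. -/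
def rSum {V W : Type*} (G : SimpleGraph V) (H : SimpleGraph W) :
    SimpleGraph ((V ⊕ ↥G.edgeSet) × W) :=
  fSum (rGraph G) H

/-- The `Q`-sum `G +_Q H`. -/
def qSum {V W : Type*} (G : SimpleGraph V) (H : SimpleGraph W) :
    SimpleGraph ((V ⊕ ↥G.edgeSet) × W) :=
  fSum (qGraph G) H

/-- The `T`-sum `G +_T H`. -/
def tSum {V W : Type*} (G : SimpleGraph V) (H : SimpleGraph W) :
    SimpleGraph ((V ⊕ ↥G.edgeSet) × W) :=
  fSum (tGraph G) H

/-- The star graph `S_n = K_{1,n}`. -/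
def starGraph (n : ℕ) : SimpleGraph (Fin 1 ⊕ Fin n) :=
  completeBipartiteGraph (Fin 1) (Fin n)

section Generic
variable {V : Type*}

lemma orient_or {G : SimpleGraph V} {A : Finset (V × V)} (h : IsOrientation G A)
    {u v : V} (huv : G.Adj u v) : (u, v) ∈ A ∨ (v, u) ∈ A := by
  by_cases hm : (v, u) ∈ A
  · exact Or.inr hm
  · exact Or.inl ((h.2 u v huv).2 hm)

lemma outdeg_two {A : Finset (V × V)} {u x y : V} (h1 : (u, x) ∈ A) (h2 : (u, y) ∈ A)
    (hxy : x ≠ y) : 2 ≤ arcOutDeg A u := by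
  have hsub : ({(u, x), (u, y)} : Finset (V × V)) ⊆ A.filter fun a => a.1 = u := by
    intro p hp
    simp only [Finset.mem_insert, Finset.mem_singleton] at hp
    rcases hp with rfl | rfl <;> simp [Finset.mem_filter, h1, h2]
  have hcard : ({(u, x), (u, y)} : Finset (V × V)).card = 2 := by
    rw [Finset.card_insert_of_notMem (by simp [hxy]), Finset.card_singleton]
  calc 2 = _ := hcard.symm
    _ ≤ _ := Finset.card_le_card hsub

/-- If `u` already has an outgoing arc to `x`, and `uy` is an edge with `y ≠ x`,
then the edge `uy` is oriented into `u`. -/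
lemma forced_in {G : SimpleGraph V} {A : Finset (V × V)} (hA : IsOrientation G A)
    (hd : ∀ v, arcOutDeg A v < 2) {u x y : V} (h1 : (u, x) ∈ A) (h2 : G.Adj u y)
    (hne : y ≠ x) : (y, u) ∈ A := by
  rcases orient_or hA h2 with h | h
  · exact absurd (outdeg_two h1 h (fun he => hne he.symm)) (by have := hd u; omega)
  · exact h

lemma outdeg_pos {A : Finset (V × V)} {u x : V} (h : (u, x) ∈ A) : 1 ≤ arcOutDeg A u :=
  Finset.card_pos.2 ⟨(u, x), Finset.mem_filter.2 ⟨h, rfl⟩⟩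

lemma indeg_pos {A : Finset (V × V)} {u x : V} (h : (u, x) ∈ A) : 1 ≤ arcInDeg A x :=
  Finset.card_pos.2 ⟨(u, x), Finset.mem_filter.2 ⟨h, rfl⟩⟩

lemma exists_of_outdeg_pos {A : Finset (V × V)} {v : V} (h : 1 ≤ arcOutDeg A v) :
    ∃ r ∈ A, r.1 = v := by
  obtain ⟨r, hr⟩ := Finset.card_pos.1 h
  rw [Finset.mem_filter] at hr
  exact ⟨r, hr.1, hr.2⟩

lemma isEulerianSub_empty : IsEulerianSub (∅ : Finset (V × V)) := by
  intro v; simp [arcInDeg, arcOutDeg]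

lemma isAT_of_even {A : Finset (V × V)}
    (h : ∀ B ⊆ A, IsEulerianSub B → Even B.card) : IsATOrientation A := by
  have hodd : (A.powerset.filter fun B => IsEulerianSub B ∧ ¬ Even B.card) = ∅ := by
    apply Finset.filter_eq_empty_iff.2
    intro B hB hcon
    exact hcon.2 (h B (Finset.mem_powerset.1 hB) hcon.1)
  have heven : (∅ : Finset (V × V)) ∈
      A.powerset.filter fun B => IsEulerianSub B ∧ Even B.card := by
    simp [Finset.mem_filter, isEulerianSub_empty]
  unfold IsATOrientation
  rw [hodd]
  simp only [Finset.card_empty]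
  exact Finset.card_ne_zero_of_mem heven

lemma eulerian_eq_empty_of_monotone {A B : Finset (V × V)} (ord : V → ℕ)
    (hA : ∀ a ∈ A, ord a.1 < ord a.2) (hBA : B ⊆ A) (hB : IsEulerianSub B) : B = ∅ := by
  by_contra hne
  obtain ⟨b, hb, hmax⟩ := Finset.exists_max_image B (fun a => ord a.2)
    (Finset.nonempty_of_ne_empty hne)
  have hin : 1 ≤ arcInDeg B b.2 := Finset.card_pos.2 ⟨b, Finset.mem_filter.2 ⟨hb, rfl⟩⟩
  have hout : 1 ≤ arcOutDeg B b.2 := by rw [← hB b.2]; exact hin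
  obtain ⟨c, hc⟩ := Finset.card_pos.1 hout
  rw [Finset.mem_filter] at hc
  have h1 : ord c.1 < ord c.2 := hA c (hBA hc.1)
  have h2 : ord c.2 ≤ ord b.2 := hmax c hc.1
  rw [hc.2] at h1
  omega

lemma isAT_of_monotone {A : Finset (V × V)} (ord : V → ℕ)
    (hA : ∀ a ∈ A, ord a.1 < ord a.2) : IsATOrientation A := by
  apply isAT_of_even
  intro B hBA hB
  rw [eulerian_eq_empty_of_monotone ord hA hBA hB]
  simp

end Generic





section Adj
variable {V W : Type*} {G : SimpleGraph V} {H : SimpleGraph W}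

lemma qGraph_adj_iff {a b : V ⊕ ↥G.edgeSet} :
    (qGraph G).Adj a b ↔
      (∃ u e, ((a = Sum.inl u ∧ b = Sum.inr e) ∨ (a = Sum.inr e ∧ b = Sum.inl u)) ∧
        u ∈ (e : Sym2 V)) ∨
      (∃ e f, a = Sum.inr e ∧ b = Sum.inr f ∧ e ≠ f ∧
        ∃ u : V, u ∈ (e : Sym2 V) ∧ u ∈ (f : Sym2 V)) := by
  rw [qGraph, SimpleGraph.fromRel_adj]
  constructor
  · rintro ⟨hne, h | h⟩ <;> rcases a with u | e <;> rcases b with v | f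
    · exact h.elim
    · exact Or.inl ⟨u, f, Or.inl ⟨rfl, rfl⟩, h⟩
    · exact h.elim
    · exact Or.inr ⟨e, f, rfl, rfl, h⟩
    · exact h.elim
    · exact h.elim
    · exact Or.inl ⟨v, e, Or.inr ⟨rfl, rfl⟩, h⟩
    · obtain ⟨h1, u, h2, h3⟩ := h
      exact Or.inr ⟨e, f, rfl, rfl, h1.symm, u, h3, h2⟩
  · rintro (⟨u, e, h | h, hm⟩ | ⟨e, f, rfl, rfl, hne, u, hu1, hu2⟩)
    · obtain ⟨rfl, rfl⟩ := h
      exact ⟨by simp, Or.inl hm⟩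
    · obtain ⟨rfl, rfl⟩ := h
      exact ⟨by simp, Or.inr hm⟩
    · exact ⟨by simpa using hne, Or.inl ⟨hne, u, hu1, hu2⟩⟩

lemma fSum_adj_iff {E : Type*} {K : SimpleGraph (V ⊕ E)} {x y : (V ⊕ E) × W} :
    (fSum K H).Adj x y ↔
      (x.1 = y.1 ∧ (∃ u : V, x.1 = Sum.inl u) ∧ H.Adj x.2 y.2) ∨
        (x.2 = y.2 ∧ K.Adj x.1 y.1) := by
  rw [fSum, SimpleGraph.fromRel_adj]
  constructor
  · rintro ⟨hne, (h | h) | (h | h)⟩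
    · exact Or.inl h
    · exact Or.inr h
    · obtain ⟨h1, h2, h3⟩ := h
      refine Or.inl ⟨h1.symm, ?_, h3.symm⟩
      rwa [h1] at h2
    · exact Or.inr ⟨h.1.symm, h.2.symm⟩
  · rintro (⟨h1, h2, h3⟩ | ⟨h1, h2⟩)
    · refine ⟨?_, Or.inl (Or.inl ⟨h1, h2, h3⟩)⟩
      intro he; rw [he] at h3; exact H.irrefl h3
    · refine ⟨?_, Or.inl (Or.inr ⟨h1, h2⟩)⟩
      intro he; rw [he] at h2; exact K.irrefl h2

end Adj

section PathEdges

/-- index of an edge of a path graph: the min of its two endpoints -/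
noncomputable def eIdx {n : ℕ} (e : Sym2 (Fin n)) : ℕ :=
  Sym2.lift ⟨fun a b => min a.val b.val, fun a b => min_comm _ _⟩ e

lemma edge_struct {n : ℕ} {e : Sym2 (Fin n)} (he : e ∈ (SimpleGraph.pathGraph n).edgeSet) :
    ∃ a b : Fin n, e = s(a, b) ∧ a.val + 1 = b.val ∧ eIdx e = a.val := by
  induction e with
  | _ x y =>
    rw [SimpleGraph.mem_edgeSet, SimpleGraph.pathGraph_adj] at he
    rcases he with h | h
    · exact ⟨x, y, rfl, h, by simp [eIdx]; omega⟩
    · exact ⟨y, x, Sym2.eq_swap, h, by simp [eIdx]; omega⟩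

lemma edge_inj {n : ℕ} {e f : Sym2 (Fin n)} (he : e ∈ (SimpleGraph.pathGraph n).edgeSet)
    (hf : f ∈ (SimpleGraph.pathGraph n).edgeSet) (h : eIdx e = eIdx f) : e = f := by
  obtain ⟨a, b, rfl, hab, ha⟩ := edge_struct he
  obtain ⟨c, d, rfl, hcd, hc⟩ := edge_struct hf
  have h1 : a = c := Fin.ext (by omega)
  have h2 : b = d := Fin.ext (by omega)
  rw [h1, h2]

lemma mem_edge {n : ℕ} {e : Sym2 (Fin n)} (he : e ∈ (SimpleGraph.pathGraph n).edgeSet)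
    {u : Fin n} (hu : u ∈ e) : u.val = eIdx e ∨ u.val = eIdx e + 1 := by
  obtain ⟨a, b, rfl, hab, ha⟩ := edge_struct he
  rw [Sym2.mem_iff] at hu
  rcases hu with rfl | rfl
  · omega
  · omega

lemma eIdx_lt {n : ℕ} {e : Sym2 (Fin n)} (he : e ∈ (SimpleGraph.pathGraph n).edgeSet) :
    eIdx e + 1 < n := by
  obtain ⟨a, b, rfl, hab, ha⟩ := edge_struct he
  have := b.isLt
  omega

lemma edge_of_idx {n : ℕ} {e : Sym2 (Fin n)} (he : e ∈ (SimpleGraph.pathGraph n).edgeSet)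
    {k : ℕ} (hk : eIdx e = k) (hkn : k + 1 < n) :
    e = s(⟨k, Nat.lt_of_succ_lt hkn⟩, ⟨k + 1, hkn⟩) := by
  obtain ⟨a, b, rfl, hab, ha⟩ := edge_struct he
  have h1 : a = ⟨k, Nat.lt_of_succ_lt hkn⟩ := Fin.ext (by simp; omega)
  have h2 : b = ⟨k + 1, hkn⟩ := Fin.ext (by simp; omega)
  subst h1 h2
  rfl

end PathEdges

section Nat
lemma nat_key {c d a b M : ℕ} (ha : a < M) (hb : b < M) (h : c * M + a = d * M + b) :
    c = d ∧ a = b := by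
  have h1 : (c * M + a) % M = a := by rw [Nat.mul_add_mod']; exact Nat.mod_eq_of_lt ha
  have h2 : (d * M + b) % M = b := by rw [Nat.mul_add_mod']; exact Nat.mod_eq_of_lt hb
  have hab : a = b := by rw [← h1, ← h2, h]
  refine ⟨?_, hab⟩
  have hcd : c * M = d * M := by omega
  have hM : 0 < M := by omega
  exact Nat.eq_of_mul_eq_mul_right hM hcd

lemma nat_key_lt {c d a b M : ℕ} (ha : a < M) (hb : b < M) (h : c * M + a < d * M + b) :
    c ≤ d := by
  by_contra h'
  have h'' : d + 1 ≤ c := by omega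
  have := Nat.mul_le_mul_right (k := M) h''
  rw [Nat.add_mul, one_mul] at this
  omega
end Nat

section QSumStruct
open SimpleGraph

abbrev QV (n m : ℕ) := (Fin n ⊕ ↥(SimpleGraph.pathGraph n).edgeSet) × Fin m

noncomputable def colIdx {n : ℕ} : Fin n ⊕ ↥(SimpleGraph.pathGraph n).edgeSet → ℕ
  | Sum.inl u => 2 * u.val
  | Sum.inr e => 2 * eIdx (e : Sym2 (Fin n)) + 1

noncomputable def ordV {n m : ℕ} (x : QV n m) : ℕ := colIdx x.1 * m + x.2.val

lemma ordV_ne_of_adj {n m : ℕ} {x y : QV n m}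
    (h : (qSum (pathGraph n) (pathGraph m)).Adj x y) : ordV x ≠ ordV y := by
  intro heq
  unfold ordV at heq
  obtain ⟨hc, hj⟩ := nat_key x.2.isLt y.2.isLt heq
  have hj2 : x.2 = y.2 := Fin.ext hj
  rw [qSum, fSum_adj_iff] at h
  rcases h with ⟨h1, _, hadj⟩ | ⟨h2, hK⟩
  · rw [pathGraph_adj] at hadj
    rw [hj2] at hadj
    omega
  · rw [qGraph_adj_iff] at hK
    rcases hK with ⟨u, e, hcase, hu⟩ | ⟨e, f, hxe, hyf, hef, _⟩
    · rcases hcase with ⟨hx, hy⟩ | ⟨hx, hy⟩ <;> rw [hx, hy] at hc <;>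
        simp only [colIdx] at hc <;> omega
    · rw [hxe, hyf] at hc
      simp only [colIdx] at hc
      have : (e : Sym2 (Fin n)) = (f : Sym2 (Fin n)) := edge_inj e.2 f.2 (by omega)
      exact hef (Subtype.ext this)

lemma later_nbr {n m : ℕ} {x w : QV n m}
    (h : (qSum (pathGraph n) (pathGraph m)).Adj x w) (hlt : ordV x < ordV w) :
    (∃ u : Fin n, x.1 = Sum.inl u ∧ w.1 = Sum.inl u ∧ w.2.val = x.2.val + 1) ∨
    (∃ (u : Fin n) (e : ↥(pathGraph n).edgeSet), x.1 = Sum.inl u ∧ w.1 = Sum.inr e ∧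
      w.2 = x.2 ∧ eIdx (e : Sym2 (Fin n)) = u.val) ∨
    (∃ (e : ↥(pathGraph n).edgeSet) (u : Fin n), x.1 = Sum.inr e ∧ w.1 = Sum.inl u ∧
      w.2 = x.2 ∧ u.val = eIdx (e : Sym2 (Fin n)) + 1) ∨
    (∃ e f : ↥(pathGraph n).edgeSet, x.1 = Sum.inr e ∧ w.1 = Sum.inr f ∧ w.2 = x.2 ∧
      eIdx (f : Sym2 (Fin n)) = eIdx (e : Sym2 (Fin n)) + 1) := by
  have hcol : ∀ {a b : QV n m}, ordV a < ordV b → a.2 = b.2 → colIdx a.1 < colIdx b.1 := by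
    intro a b hab h2
    unfold ordV at hab
    rw [h2] at hab
    have hle := nat_key_lt b.2.isLt b.2.isLt hab
    rcases Nat.lt_or_ge (colIdx a.1) (colIdx b.1) with h' | h'
    · exact h'
    · exfalso; have : colIdx a.1 = colIdx b.1 := by omega
      rw [this] at hab; omega
  rw [qSum, fSum_adj_iff] at h
  rcases h with ⟨h1, ⟨u, hu⟩, hadj⟩ | ⟨h2, hK⟩
  · left
    refine ⟨u, hu, by rw [← h1]; exact hu, ?_⟩
    rw [pathGraph_adj] at hadj
    have : x.2.val < w.2.val := by
      unfold ordV at hlt; rw [h1] at hlt; omega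
    omega
  · rw [qGraph_adj_iff] at hK
    have hcc := hcol hlt h2
    rcases hK with ⟨u, e, hcase, hu⟩ | ⟨e, f, hxe, hwf, hef, v, hv1, hv2⟩
    · rcases hcase with ⟨hx, hy⟩ | ⟨hx, hy⟩
      · -- x = inl u, w = inr e
        right; left
        refine ⟨u, e, hx, hy, h2.symm, ?_⟩
        rw [hx, hy] at hcc
        simp only [colIdx] at hcc
        rcases mem_edge e.2 hu with h' | h' <;> omega
      · -- x = inr e, w = inl u
        right; right; left
        refine ⟨e, u, hx, hy, h2.symm, ?_⟩
        rw [hx, hy] at hcc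
        simp only [colIdx] at hcc
        rcases mem_edge e.2 hu with h' | h' <;> omega
    · right; right; right
      refine ⟨e, f, hxe, hwf, h2.symm, ?_⟩
      rw [hxe, hwf] at hcc
      simp only [colIdx] at hcc
      rcases mem_edge e.2 hv1 with h' | h' <;> rcases mem_edge f.2 hv2 with h'' | h'' <;> omega

lemma later_nbr_unique {n m : ℕ} {x w w' : QV n m}
    (h : (qSum (pathGraph n) (pathGraph m)).Adj x w) (hlt : ordV x < ordV w)
    (h' : (qSum (pathGraph n) (pathGraph m)).Adj x w') (hlt' : ordV x < ordV w')
    (hside : w.1.isLeft = w'.1.isLeft) : w = w' := by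
  have key : ∀ {a b : QV n m}, a.1 = b.1 → a.2 = b.2 → a = b := by
    intro a b h1 h2; exact Prod.ext h1 h2
  rcases later_nbr h hlt with ⟨u, hx, hw, hj⟩ | ⟨u, e, hx, hw, hj, hi⟩ |
      ⟨e, u, hx, hw, hj, hi⟩ | ⟨e, f, hx, hw, hj, hi⟩ <;>
    rcases later_nbr h' hlt' with ⟨u', hx', hw', hj'⟩ | ⟨u', e', hx', hw', hj', hi'⟩ |
      ⟨e', u', hx', hw', hj', hi'⟩ | ⟨e', f', hx', hw', hj', hi'⟩ <;>
    rw [hx] at hx' <;> first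
    | (exfalso; simp at hx'; done)
    | (exfalso; rw [hw, hw'] at hside; simp at hside; done)
    | skip
  · -- both vertical
    have hu : u = u' := by simpa using hx'
    refine key ?_ (Fin.ext ?_)
    · rw [hw, hw', hu]
    · omega
  · -- both inl-to-inr
    have hu : u = u' := by simpa using hx'
    have he : e = e' := Subtype.ext (edge_inj e.2 e'.2 (by rw [hi, hi', hu]))
    refine key ?_ ?_
    · rw [hw, hw', he]
    · rw [hj, hj']
  · -- both inr-to-inl
    have he : e = e' := by simpa using hx'
    have hu : u = u' := Fin.ext (by rw [hi, hi', he])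
    refine key ?_ ?_
    · rw [hw, hw', hu]
    · rw [hj, hj']
  · -- both inr-to-inr
    have he : e = e' := by simpa using hx'
    have hf : f = f' := Subtype.ext (edge_inj f.2 f'.2 (by rw [hi, hi', he]))
    refine key ?_ ?_
    · rw [hw, hw', hf]
    · rw [hj, hj']

lemma qsum_upper (n m : ℕ) :
    ∃ A : Finset (QV n m × QV n m),
      IsOrientation (qSum (pathGraph n) (pathGraph m)) A ∧
      IsATOrientation A ∧ ∀ v, arcOutDeg A v < 3 := by
  classical
  haveI : Fintype ↥(pathGraph n).edgeSet := Fintype.ofFinite _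
  set G := qSum (pathGraph n) (pathGraph m) with hG
  refine ⟨Finset.univ.filter (fun p => G.Adj p.1 p.2 ∧ ordV p.1 < ordV p.2), ?_, ?_, ?_⟩
  · constructor
    · intro a ha
      exact ((Finset.mem_filter.1 ha).2).1
    · intro u v huv
      have hne := ordV_ne_of_adj (x := u) (y := v) huv
      simp only [Finset.mem_filter, Finset.mem_univ, true_and]
      constructor
      · rintro ⟨_, hlt⟩ ⟨_, hlt'⟩
        omega
      · intro hnot
        refine ⟨huv, ?_⟩
        by_contra hlt
        exact hnot ⟨huv.symm, by omega⟩
  · apply isAT_of_monotone ordV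
    intro a ha
    exact ((Finset.mem_filter.1 ha).2).2
  · intro v
    have hle : arcOutDeg (Finset.univ.filter (fun p : QV n m × QV n m =>
        G.Adj p.1 p.2 ∧ ordV p.1 < ordV p.2)) v ≤ 2 := by
      unfold arcOutDeg
      have h2 : (Finset.univ : Finset Bool).card = 2 := by simp
      rw [← h2]
      apply Finset.card_le_card_of_injOn (fun p => p.2.1.isLeft)
        (fun _ _ => Finset.mem_univ _)
      intro p hp q hq hpq
      simp only [Finset.mem_coe, Finset.mem_filter, Finset.mem_univ, true_and] at hp hq
      obtain ⟨⟨hadj, hlt⟩, hp1⟩ := hp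
      obtain ⟨⟨hadj', hlt'⟩, hq1⟩ := hq
      have : p.2 = q.2 := by
        apply later_nbr_unique (x := v)
        · rw [← hp1]; exact hadj
        · rw [← hp1]; exact hlt
        · rw [← hq1]; exact hadj'
        · rw [← hq1]; exact hlt'
        · exact hpq
      exact Prod.ext (by rw [hp1, hq1]) this
    omega

end QSumStruct

section AdjHelpers
open SimpleGraph

lemma adj_spoke {n m : ℕ} {u : Fin n} {e : ↥(pathGraph n).edgeSet}
    (hu : u ∈ (e : Sym2 (Fin n))) (j : Fin m) :
    (qSum (pathGraph n) (pathGraph m)).Adj (Sum.inl u, j) (Sum.inr e, j) := by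
  rw [qSum, fSum_adj_iff]
  exact Or.inr ⟨rfl, qGraph_adj_iff.2 (Or.inl ⟨u, e, Or.inl ⟨rfl, rfl⟩, hu⟩)⟩

lemma adj_ee {n m : ℕ} {e f : ↥(pathGraph n).edgeSet} (hef : e ≠ f) {u : Fin n}
    (h1 : u ∈ (e : Sym2 (Fin n))) (h2 : u ∈ (f : Sym2 (Fin n))) (j : Fin m) :
    (qSum (pathGraph n) (pathGraph m)).Adj (Sum.inr e, j) (Sum.inr f, j) := by
  rw [qSum, fSum_adj_iff]
  exact Or.inr ⟨rfl, qGraph_adj_iff.2 (Or.inr ⟨e, f, rfl, rfl, hef, u, h1, h2⟩)⟩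

lemma adj_vert {n m : ℕ} (u : Fin n) {j j' : Fin m} (h : j.val + 1 = j'.val) :
    (qSum (pathGraph n) (pathGraph m)).Adj (Sum.inl u, j) (Sum.inl u, j') := by
  rw [qSum, fSum_adj_iff]
  exact Or.inl ⟨rfl, ⟨u, rfl⟩, pathGraph_adj.2 (Or.inl h)⟩

end AdjHelpers

section LowerBounds
open SimpleGraph

lemma triangle_block {V : Type*} {G : SimpleGraph V} {A : Finset (V × V)}
    (hA : IsOrientation G A) (hd : ∀ v, arcOutDeg A v < 2) {a b c d : V}
    (hab : G.Adj a b) (hac : G.Adj a c) (hbc : G.Adj b c) (had : (a, d) ∈ A)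
    (hdb : b ≠ d) (hdc : c ≠ d) : False := by
  have hba : (b, a) ∈ A := forced_in hA hd had hab hdb
  have hca : (c, a) ∈ A := forced_in hA hd had hac hdc
  rcases orient_or hA hbc with h | h
  · exact absurd (outdeg_two hba h hac.ne) (by have := hd b; omega)
  · exact absurd (outdeg_two hca h hab.ne) (by have := hd c; omega)

lemma chain_block {V : Type*} {G : SimpleGraph V} {A : Finset (V × V)}
    (hA : IsOrientation G A) (hd : ∀ v, arcOutDeg A v < 2)
    {p0 p1 p2 q0 q1 q2 t0 t1 t2 : V}
    (hp01 : G.Adj p0 p1) (hp12 : G.Adj p1 p2)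
    (hq01 : G.Adj q0 q1) (hq12 : G.Adj q1 q2)
    (ht0p : G.Adj t0 p0) (ht0q : G.Adj t0 q0)
    (ht2p : G.Adj t2 p2) (ht2q : G.Adj t2 q2)
    (hne1 : p0 ≠ t1) (hne2 : p2 ≠ t1) (hne3 : t0 ≠ p1) (hne4 : t2 ≠ p1)
    (hne5 : q0 ≠ p0) (hne6 : q2 ≠ p2) (hne7 : q1 ≠ t0) (hne8 : q1 ≠ t2) (hne9 : q0 ≠ q2)
    (hstart : (p1, t1) ∈ A) : False := by
  have h1 : (p0, p1) ∈ A := forced_in hA hd hstart hp01.symm hne1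
  have h2 : (p2, p1) ∈ A := forced_in hA hd hstart hp12 hne2
  have h3 : (t0, p0) ∈ A := forced_in hA hd h1 ht0p.symm hne3
  have h4 : (t2, p2) ∈ A := forced_in hA hd h2 ht2p.symm hne4
  have h5 : (q0, t0) ∈ A := forced_in hA hd h3 ht0q hne5
  have h6 : (q2, t2) ∈ A := forced_in hA hd h4 ht2q hne6
  have h7 : (q1, q0) ∈ A := forced_in hA hd h5 hq01 hne7
  have h8 : (q1, q2) ∈ A := forced_in hA hd h6 hq12.symm hne8
  exact absurd (outdeg_two h7 h8 hne9) (by have := hd q1; omega)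

lemma lower_n3 {n m : ℕ} (hn : 3 ≤ n) (hm : 2 ≤ m)
    {A : Finset (QV n m × QV n m)}
    (hA : IsOrientation (qSum (pathGraph n) (pathGraph m)) A)
    (hd : ∀ v, arcOutDeg A v < 2) : False := by
  have h0 : (0 : ℕ) < n := by omega
  have h1 : (1 : ℕ) < n := by omega
  have h2 : (2 : ℕ) < n := by omega
  have hj0 : (0 : ℕ) < m := by omega
  have hj1 : (1 : ℕ) < m := by omega
  have he1 : s((⟨0, h0⟩ : Fin n), (⟨1, h1⟩ : Fin n)) ∈ (pathGraph n).edgeSet := by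
    rw [mem_edgeSet, pathGraph_adj]; left; rfl
  have he2 : s((⟨1, h1⟩ : Fin n), (⟨2, h2⟩ : Fin n)) ∈ (pathGraph n).edgeSet := by
    rw [mem_edgeSet, pathGraph_adj]; left; rfl
  set e1 : ↥(pathGraph n).edgeSet := ⟨_, he1⟩ with he1'
  set e2 : ↥(pathGraph n).edgeSet := ⟨_, he2⟩ with he2'
  have hne12 : e1 ≠ e2 := by
    intro h
    have := congrArg (fun f : ↥(pathGraph n).edgeSet => eIdx (f : Sym2 (Fin n))) h
    simp only [he1', he2', eIdx, Sym2.lift_mk] at this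
    omega
  set u2 : Fin n := ⟨1, h1⟩ with hu2
  have hmem1 : u2 ∈ (e1 : Sym2 (Fin n)) := Sym2.mem_iff.2 (Or.inr rfl)
  have hmem2 : u2 ∈ (e2 : Sym2 (Fin n)) := Sym2.mem_iff.2 (Or.inl rfl)
  set j0 : Fin m := ⟨0, hj0⟩ with hj0'
  set j1 : Fin m := ⟨1, hj1⟩ with hj1'
  have hvert : (qSum (pathGraph n) (pathGraph m)).Adj (Sum.inl u2, j0) (Sum.inl u2, j1) :=
    adj_vert u2 rfl
  rcases orient_or hA hvert with h | h
  · exact triangle_block hA hd (adj_spoke hmem1 j0) (adj_spoke hmem2 j0)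
      (adj_ee hne12 hmem1 hmem2 j0) h (by simp) (by simp)
  · exact triangle_block hA hd (adj_spoke hmem1 j1) (adj_spoke hmem2 j1)
      (adj_ee hne12 hmem1 hmem2 j1) h
      (by simp [hj0', hj1', Prod.ext_iff]) (by simp [hj0', hj1', Prod.ext_iff])

lemma lower_n2 {m : ℕ} (hm : 3 ≤ m) {A : Finset (QV 2 m × QV 2 m)}
    (hA : IsOrientation (qSum (pathGraph 2) (pathGraph m)) A)
    (hd : ∀ v, arcOutDeg A v < 2) : False := by
  have hj0 : (0 : ℕ) < m := by omega
  have hj1 : (1 : ℕ) < m := by omega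
  have hj2 : (2 : ℕ) < m := by omega
  have he : s((0 : Fin 2), (1 : Fin 2)) ∈ (pathGraph 2).edgeSet := by
    rw [mem_edgeSet, pathGraph_adj]; left; rfl
  set e : ↥(pathGraph 2).edgeSet := ⟨_, he⟩ with he'
  have hm0 : (0 : Fin 2) ∈ (e : Sym2 (Fin 2)) := Sym2.mem_iff.2 (Or.inl rfl)
  have hm1 : (1 : Fin 2) ∈ (e : Sym2 (Fin 2)) := Sym2.mem_iff.2 (Or.inr rfl)
  set j0 : Fin m := ⟨0, hj0⟩ with hj0'
  set j1 : Fin m := ⟨1, hj1⟩ with hj1'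
  set j2 : Fin m := ⟨2, hj2⟩ with hj2'
  have hrun : ∀ i i' : Fin 2, i ≠ i' → i ∈ (e : Sym2 (Fin 2)) → i' ∈ (e : Sym2 (Fin 2)) →
      ((Sum.inl i, j1), (Sum.inr e, j1)) ∈ A → False := by
    intro i i' hii' hie hie' hstart
    refine chain_block hA hd (p0 := (Sum.inl i, j0)) (p1 := (Sum.inl i, j1))
      (p2 := (Sum.inl i, j2)) (q0 := (Sum.inl i', j0)) (q1 := (Sum.inl i', j1))
      (q2 := (Sum.inl i', j2)) (t0 := (Sum.inr e, j0)) (t1 := (Sum.inr e, j1))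
      (t2 := (Sum.inr e, j2))
      (adj_vert i rfl) (adj_vert i rfl) (adj_vert i' rfl) (adj_vert i' rfl)
      (adj_spoke hie j0).symm (adj_spoke hie' j0).symm
      (adj_spoke hie j2).symm (adj_spoke hie' j2).symm
      ?_ ?_ ?_ ?_ ?_ ?_ ?_ ?_ ?_ hstart
    · simp
    · simp
    · simp
    · simp
    · simp [Prod.ext_iff, Ne.symm hii']
    · simp [Prod.ext_iff, Ne.symm hii']
    · simp
    · simp
    · simp [hj0', hj2', Prod.ext_iff, Fin.ext_iff]
  rcases orient_or hA (adj_spoke hm0 j1) with h | h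
  · exact hrun 0 1 (by decide) hm0 hm1 h
  · rcases orient_or hA (adj_spoke hm1 j1) with h' | h'
    · exact hrun 1 0 (by decide) hm1 hm0 h'
    · refine absurd (outdeg_two h h' ?_) (by have := hd (Sum.inr e, j1); omega)
      simp [Prod.ext_iff]

end LowerBounds

section TwoTwo
open SimpleGraph

def E22 : ↥(SimpleGraph.pathGraph 2).edgeSet :=
  ⟨s(0, 1), by rw [SimpleGraph.mem_edgeSet, SimpleGraph.pathGraph_adj]; left; rfl⟩

lemma edge_unique2 (f : ↥(SimpleGraph.pathGraph 2).edgeSet) : f = E22 := by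
  obtain ⟨a, b, hab, h1, _⟩ := edge_struct f.2
  apply Subtype.ext
  rw [hab]
  have ha : a = 0 := Fin.ext (by have := b.isLt; omega)
  have hb : b = 1 := Fin.ext (by have := b.isLt; omega)
  rw [ha, hb]
  rfl

lemma vcases22 (x : QV 2 2) :
    x = (Sum.inl 0, 0) ∨ x = (Sum.inl 0, 1) ∨ x = (Sum.inl 1, 0) ∨ x = (Sum.inl 1, 1) ∨
    x = (Sum.inr E22, 0) ∨ x = (Sum.inr E22, 1) := by
  obtain ⟨x1, x2⟩ := x
  rcases x1 with u | f
  · fin_cases u <;> fin_cases x2 <;> simp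
  · rw [edge_unique2 f]
    fin_cases x2 <;> simp

lemma adj22 {x y : QV 2 2} :
    (qSum (pathGraph 2) (pathGraph 2)).Adj x y ↔
      (x.1 = y.1 ∧ x.1.isLeft = true ∧ x.2 ≠ y.2) ∨
      (x.2 = y.2 ∧ ((x.1.isLeft = true ∧ y.1.isLeft = false) ∨
        (x.1.isLeft = false ∧ y.1.isLeft = true))) := by
  rw [qSum, fSum_adj_iff]
  constructor
  · rintro (⟨h1, ⟨u, hu⟩, hadj⟩ | ⟨h2, hK⟩)
    · exact Or.inl ⟨h1, by rw [hu]; rfl, hadj.ne⟩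
    · refine Or.inr ⟨h2, ?_⟩
      rw [qGraph_adj_iff] at hK
      rcases hK with ⟨u, f, ⟨hx, hy⟩ | ⟨hx, hy⟩, _⟩ | ⟨f, g, hx, hy, hfg, _⟩
      · rw [hx, hy]; exact Or.inl ⟨rfl, rfl⟩
      · rw [hx, hy]; exact Or.inr ⟨rfl, rfl⟩
      · exact absurd ((edge_unique2 f).trans (edge_unique2 g).symm) hfg
  · rintro (⟨h1, hL, h2⟩ | ⟨h2, hS⟩)
    · obtain ⟨u, hu⟩ : ∃ u, x.1 = Sum.inl u := by
        rcases hx : x.1 with u | f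
        · exact ⟨u, rfl⟩
        · rw [hx] at hL; simp at hL
      refine Or.inl ⟨h1, ⟨u, hu⟩, ?_⟩
      rw [pathGraph_adj]
      have h2' : x.2.val ≠ y.2.val := fun hv => h2 (Fin.ext hv)
      have := x.2.isLt
      have := y.2.isLt
      omega
    · refine Or.inr ⟨h2, ?_⟩
      rw [qGraph_adj_iff]
      rcases hS with ⟨hxL, hyR⟩ | ⟨hxR, hyL⟩
      · obtain ⟨u, hu⟩ : ∃ u, x.1 = Sum.inl u := by
          rcases hx : x.1 with u | f
          · exact ⟨u, rfl⟩
          · rw [hx] at hxL; simp at hxL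
        obtain ⟨f, hf⟩ : ∃ f, y.1 = Sum.inr f := by
          rcases hy : y.1 with u' | f
          · rw [hy] at hyR; simp at hyR
          · exact ⟨f, rfl⟩
        refine Or.inl ⟨u, f, Or.inl ⟨hu, hf⟩, ?_⟩
        rw [edge_unique2 f]
        have : u = 0 ∨ u = 1 := by omega
        rcases this with rfl | rfl
        · exact Sym2.mem_mk_left _ _
        · exact Sym2.mem_mk_right _ _
      · obtain ⟨f, hf⟩ : ∃ f, x.1 = Sum.inr f := by
          rcases hx : x.1 with u' | f
          · rw [hx] at hxR; simp at hxR
          · exact ⟨f, rfl⟩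
        obtain ⟨u, hu⟩ : ∃ u, y.1 = Sum.inl u := by
          rcases hy : y.1 with u | f'
          · exact ⟨u, rfl⟩
          · rw [hy] at hyL; simp at hyL
        refine Or.inl ⟨u, f, Or.inr ⟨hf, hu⟩, ?_⟩
        rw [edge_unique2 f]
        have : u = 0 ∨ u = 1 := by omega
        rcases this with rfl | rfl
        · exact Sym2.mem_mk_left _ _
        · exact Sym2.mem_mk_right _ _

def A22 : Finset (QV 2 2 × QV 2 2) :=
  {((Sum.inl 0, 0), (Sum.inr E22, 0)),
   ((Sum.inr E22, 0), (Sum.inl 1, 0)),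
   ((Sum.inl 1, 0), (Sum.inl 1, 1)),
   ((Sum.inl 1, 1), (Sum.inr E22, 1)),
   ((Sum.inr E22, 1), (Sum.inl 0, 1)),
   ((Sum.inl 0, 1), (Sum.inl 0, 0))}

lemma mem_A22 {p : QV 2 2 × QV 2 2} : p ∈ A22 ↔
    p = ((Sum.inl 0, 0), (Sum.inr E22, 0)) ∨
    p = ((Sum.inr E22, 0), (Sum.inl 1, 0)) ∨
    p = ((Sum.inl 1, 0), (Sum.inl 1, 1)) ∨
    p = ((Sum.inl 1, 1), (Sum.inr E22, 1)) ∨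
    p = ((Sum.inr E22, 1), (Sum.inl 0, 1)) ∨
    p = ((Sum.inl 0, 1), (Sum.inl 0, 0)) := by
  simp [A22]

lemma unique_tail22 : ∀ p ∈ A22, ∀ q ∈ A22, p.1 = q.1 → p = q := by
  intro p hp q hq h
  rcases mem_A22.1 hp with rfl | rfl | rfl | rfl | rfl | rfl <;>
    rcases mem_A22.1 hq with rfl | rfl | rfl | rfl | rfl | rfl <;>
    first | rfl | (exfalso; simp at h)

lemma orientation22 : IsOrientation (qSum (pathGraph 2) (pathGraph 2)) A22 := by
  constructor
  · intro a ha
    rcases mem_A22.1 ha with rfl | rfl | rfl | rfl | rfl | rfl <;> (rw [adj22]; simp)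
  · intro u v huv
    rw [adj22] at huv
    rcases vcases22 u with rfl | rfl | rfl | rfl | rfl | rfl <;>
      rcases vcases22 v with rfl | rfl | rfl | rfl | rfl | rfl <;>
      simp_all [mem_A22]

lemma outdeg22 : ∀ v, arcOutDeg A22 v < 2 := by
  intro v
  have hle : arcOutDeg A22 v ≤ 1 := by
    unfold arcOutDeg
    apply Finset.card_le_one.2
    intro a ha b hb
    simp only [Finset.mem_filter] at ha hb
    exact unique_tail22 a ha.1 b hb.1 (ha.2.trans hb.2.symm)
  omega

lemma card_A22 : A22.card = 6 := by
  unfold A22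
  rw [Finset.card_insert_of_notMem (by simp), Finset.card_insert_of_notMem (by simp),
    Finset.card_insert_of_notMem (by simp), Finset.card_insert_of_notMem (by simp),
    Finset.card_insert_of_notMem (by simp), Finset.card_singleton]

lemma at22 : IsATOrientation A22 := by
  apply isAT_of_even
  intro B hBA hB
  by_cases hBe : B = ∅
  · simp [hBe]
  have hstep : ∀ p ∈ B, ∀ q ∈ A22, p.2 = q.1 → q ∈ B := by
    intro p hp q hq hpq
    have hin : 1 ≤ arcInDeg B p.2 := indeg_pos (u := p.1) (by exact hp)
    have hout : 1 ≤ arcOutDeg B p.2 := by rw [← hB p.2]; exact hin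
    obtain ⟨r, hr1, hr2⟩ := exists_of_outdeg_pos hout
    have := unique_tail22 r (hBA hr1) q hq (hr2.trans hpq)
    rw [← this]
    exact hr1
  obtain ⟨p, hp⟩ := Finset.nonempty_of_ne_empty hBe
  have hpA := hBA hp
  have i1 : ((Sum.inl 0, 0), (Sum.inr E22, 0)) ∈ B → ((Sum.inr E22, 0), (Sum.inl 1, 0)) ∈ B :=
    fun h => hstep _ h _ (mem_A22.2 (Or.inr (Or.inl rfl))) rfl
  have i2 : ((Sum.inr E22, 0), (Sum.inl 1, 0)) ∈ B → ((Sum.inl 1, 0), (Sum.inl 1, 1)) ∈ B :=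
    fun h => hstep _ h _ (mem_A22.2 (Or.inr (Or.inr (Or.inl rfl)))) rfl
  have i3 : ((Sum.inl 1, 0), (Sum.inl 1, 1)) ∈ B → ((Sum.inl 1, 1), (Sum.inr E22, 1)) ∈ B :=
    fun h => hstep _ h _ (mem_A22.2 (Or.inr (Or.inr (Or.inr (Or.inl rfl))))) rfl
  have i4 : ((Sum.inl 1, 1), (Sum.inr E22, 1)) ∈ B → ((Sum.inr E22, 1), (Sum.inl 0, 1)) ∈ B :=
    fun h => hstep _ h _ (mem_A22.2 (Or.inr (Or.inr (Or.inr (Or.inr (Or.inl rfl)))))) rfl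
  have i5 : ((Sum.inr E22, 1), (Sum.inl 0, 1)) ∈ B → ((Sum.inl 0, 1), (Sum.inl 0, 0)) ∈ B :=
    fun h => hstep _ h _ (mem_A22.2 (Or.inr (Or.inr (Or.inr (Or.inr (Or.inr rfl)))))) rfl
  have i6 : ((Sum.inl 0, 1), (Sum.inl 0, 0)) ∈ B → ((Sum.inl 0, 0), (Sum.inr E22, 0)) ∈ B :=
    fun h => hstep _ h _ (mem_A22.2 (Or.inl rfl)) rfl
  have build : ((Sum.inl 0, 0), (Sum.inr E22, 0)) ∈ B → ∀ q ∈ A22, q ∈ B := by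
    intro h1 q hq
    have h2 := i1 h1
    have h3 := i2 h2
    have h4 := i3 h3
    have h5 := i4 h4
    have h6 := i5 h5
    rcases mem_A22.1 hq with rfl | rfl | rfl | rfl | rfl | rfl <;> assumption
  have hall : ∀ q ∈ A22, q ∈ B := by
    rcases mem_A22.1 hpA with h | h | h | h | h | h
    · exact build (h ▸ hp)
    · exact build (i6 (i5 (i4 (i3 (i2 (h ▸ hp))))))
    · exact build (i6 (i5 (i4 (i3 (h ▸ hp)))))
    · exact build (i6 (i5 (i4 (h ▸ hp))))
    · exact build (i6 (i5 (h ▸ hp)))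
    · exact build (i6 (h ▸ hp))
  have hBA22 : B = A22 := Finset.Subset.antisymm hBA hall
  rw [hBA22, card_A22]
  decide

end TwoTwo

/-- `AT(P_n +_Q P_m) = 2` if `n = 2` and `m = 2`, and `= 3` otherwise. -/
theorem stmt15 (n m : ℕ) (hn : 2 ≤ n) (hm : 2 ≤ m) :
    alonTarsiNumber (qSum (SimpleGraph.pathGraph n) (SimpleGraph.pathGraph m)) =
      if n = 2 ∧ m = 2 then 2 else 3 := by
  by_cases h22 : n = 2 ∧ m = 2
  · obtain ⟨rfl, rfl⟩ := h22
    rw [if_pos ⟨rfl, rfl⟩]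
    unfold alonTarsiNumber
    apply le_antisymm
    · apply Nat.sInf_le
      exact ⟨A22, orientation22, at22, outdeg22⟩
    · refine le_csInf ⟨2, ⟨A22, orientation22, at22, outdeg22⟩⟩ ?_
      rintro k ⟨A, hA, -, hdk⟩
      by_contra hk
      have hadj := adj_spoke (m := 2) (u := (0 : Fin 2)) (e := E22)
        (Sym2.mem_mk_left _ _) (0 : Fin 2)
      rcases orient_or hA hadj with h | h
      · have := outdeg_pos h
        have := hdk (Sum.inl 0, 0)
        omega
      · have := outdeg_pos h
        have := hdk (Sum.inr E22, 0)
        omega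
  · rw [if_neg h22]
    unfold alonTarsiNumber
    obtain ⟨A, hor, hat, hd⟩ := qsum_upper n m
    apply le_antisymm
    · apply Nat.sInf_le
      exact ⟨A, hor, hat, hd⟩
    · refine le_csInf ⟨3, ⟨A, hor, hat, hd⟩⟩ ?_
      rintro k ⟨A', hA', -, hdk⟩
      by_contra hk
      have hk2 : ∀ v, arcOutDeg A' v < 2 := fun v => by have := hdk v; omega
      rcases Nat.lt_or_ge n 3 with h3 | h3
      · have hn2 : n = 2 := by omega
        subst hn2
        have hm3 : 3 ≤ m := by
          rcases Nat.lt_or_ge m 3 with h | h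
          · exact absurd ⟨rfl, by omega⟩ h22
          · exact h
        exact lower_n2 hm3 hA' hk2
      · exact lower_n3 h3 hm hA' hk2
end

section
/- Let G be a k-degenerate graph with maximum degree Δ(G) and let H be an l-degenerate graph. Then the T-sum G +_T H is max{2Δ(G), k + l}-degenerate. -/
open scoped Classical

lemma tGraph_adj_inl_inl {V : Type*} (G : SimpleGraph V) (u v : V) :
    (tGraph G).Adj (Sum.inl u) (Sum.inl v) ↔ G.Adj u v := by
  simp only [tGraph, SimpleGraph.fromRel_adj]
  constructor
  · rintro ⟨-, h | h⟩
    · exact h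
    · exact h.symm
  · exact fun h => ⟨by simpa using h.ne, Or.inl h⟩

lemma tGraph_adj_inr_inl {V : Type*} (G : SimpleGraph V) (e : G.edgeSet) (u : V) :
    (tGraph G).Adj (Sum.inr e) (Sum.inl u) ↔ u ∈ (e : Sym2 V) := by
  simp only [tGraph, SimpleGraph.fromRel_adj]
  constructor
  · rintro ⟨-, h | h⟩
    · exact h.elim
    · exact h
  · exact fun h => ⟨by simp, Or.inr h⟩

lemma tGraph_adj_inr_inr {V : Type*} (G : SimpleGraph V) (e f : G.edgeSet) :
    (tGraph G).Adj (Sum.inr e) (Sum.inr f) ↔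
      e ≠ f ∧ ∃ u : V, u ∈ (e : Sym2 V) ∧ u ∈ (f : Sym2 V) := by
  simp only [tGraph, SimpleGraph.fromRel_adj]
  constructor
  · rintro ⟨-, h | h⟩
    · exact h
    · exact ⟨h.1.symm, h.2.imp fun u hu => hu.symm⟩
  · rintro h
    exact ⟨by simpa using h.1, Or.inl h⟩

lemma tGraph_adj_inl_inr {V : Type*} (G : SimpleGraph V) (e : G.edgeSet) (u : V) :
    (tGraph G).Adj (Sum.inl u) (Sum.inr e) ↔ u ∈ (e : Sym2 V) := by
  rw [SimpleGraph.adj_comm, tGraph_adj_inr_inl]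

lemma fSum_adj_inr {V E W : Type*} (K : SimpleGraph (V ⊕ E)) (H : SimpleGraph W)
    (e : E) (w : W) (q : (V ⊕ E) × W) :
    (fSum K H).Adj (Sum.inr e, w) q ↔ q.2 = w ∧ K.Adj (Sum.inr e) q.1 := by
  simp only [fSum, SimpleGraph.fromRel_adj]
  constructor
  · rintro ⟨hne, (⟨h1, ⟨u, hu⟩, h3⟩ | ⟨h1, h2⟩) | (⟨h1, ⟨u, hu⟩, h3⟩ | ⟨h1, h2⟩)⟩
    · exact absurd hu (by simp)
    · exact ⟨h1.symm, h2⟩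
    · rw [h1] at hu; exact absurd hu (by simp)
    · exact ⟨h1, h2.symm⟩
  · rintro ⟨h1, h2⟩
    refine ⟨?_, Or.inl (Or.inr ⟨h1.symm, h2⟩)⟩
    intro hq
    rw [← hq] at h2
    exact h2.ne rfl

lemma fSum_adj_inl {V E W : Type*} (K : SimpleGraph (V ⊕ E)) (H : SimpleGraph W)
    (u : V) (w : W) (q : (V ⊕ E) × W) :
    (fSum K H).Adj (Sum.inl u, w) q ↔
      (q.1 = Sum.inl u ∧ H.Adj w q.2) ∨ (q.2 = w ∧ K.Adj (Sum.inl u) q.1) := by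
  simp only [fSum, SimpleGraph.fromRel_adj]
  constructor
  · rintro ⟨hne, (⟨h1, -, h3⟩ | ⟨h1, h2⟩) | (⟨h1, -, h3⟩ | ⟨h1, h2⟩)⟩
    · exact Or.inl ⟨h1.symm, h3⟩
    · exact Or.inr ⟨h1.symm, h2⟩
    · exact Or.inl ⟨h1, h3.symm⟩
    · exact Or.inr ⟨h1, h2.symm⟩
  · rintro (⟨h1, h2⟩ | ⟨h1, h2⟩)
    · refine ⟨?_, Or.inl (Or.inl ⟨h1.symm, ⟨u, rfl⟩, h2⟩)⟩
      intro hq; rw [← hq] at h1 h2; exact h2.ne rfl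
    · refine ⟨?_, Or.inl (Or.inr ⟨h1.symm, h2⟩)⟩
      intro hq; rw [← hq] at h2; exact h2.ne rfl

lemma sym2_exists_rep {V : Type*} (z : Sym2 V) : ∃ a b : V, z = s(a, b) := by
  induction z using Sym2.ind with
  | _ a b => exact ⟨a, b, rfl⟩

/-- if `G` is `k`-degenerate with maximum degree `Δ(G)` and `H` is
`l`-degenerate, then `G +_T H` is `max (2Δ(G)) (k + l)`-degenerate. -/
theorem stmt16 {V W : Type*} [Fintype V] [Fintype W]
    (k l : ℕ) (G : SimpleGraph V) (H : SimpleGraph W)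
    (hG : Degenerate k G) (hH : Degenerate l H) :
    Degenerate (max (2 * G.maxDegree) (k + l)) (tSum G H) := by
  classical
  intro s hs
  by_cases hE : ∃ p ∈ s, ∃ e : G.edgeSet, ∃ w : W, p = (Sum.inr e, w)
  · obtain ⟨p, hp, e, w, rfl⟩ := hE
    refine ⟨(Sum.inr e, w), hp, ?_⟩
    obtain ⟨a, b, hab⟩ := sym2_exists_rep (e : Sym2 V)
    have hadj_ab : G.Adj a b := by
      rw [← SimpleGraph.mem_edgeSet, ← hab]; exact e.2
    -- target finset
    set T : Finset (V × Sym2 V) :=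
      ((G.incidenceFinset a).image fun g => (a, g)) ∪
        ((G.incidenceFinset b).image fun g => (b, g)) with hT
    have hTcard : T.card ≤ 2 * G.maxDegree := by
      calc T.card ≤ ((G.incidenceFinset a).image fun g => (a, g)).card +
            ((G.incidenceFinset b).image fun g => (b, g)).card := Finset.card_union_le _ _
        _ ≤ (G.incidenceFinset a).card + (G.incidenceFinset b).card :=
            Nat.add_le_add (Finset.card_image_le) (Finset.card_image_le)
        _ = G.degree a + G.degree b := by
            rw [G.card_incidenceFinset_eq_degree, G.card_incidenceFinset_eq_degree]
        _ ≤ G.maxDegree + G.maxDegree :=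
            Nat.add_le_add (G.degree_le_maxDegree a) (G.degree_le_maxDegree b)
        _ = 2 * G.maxDegree := (two_mul _).symm
    refine le_trans ?_ (le_trans hTcard (le_max_left _ _))
    refine Finset.card_le_card_of_injOn
      (fun q => match q.1 with
        | Sum.inl u => (u, (e : Sym2 V))
        | Sum.inr f => (if a ∈ (f : Sym2 V) then a else b, (f : Sym2 V))) ?_ ?_
    · -- maps into T
      intro q hq
      rw [Finset.mem_coe, Finset.mem_filter] at hq
      have hadj := hq.2
      rw [tSum, fSum_adj_inr] at hadj
      obtain ⟨hq2, hadj⟩ := hadj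
      rcases hu : q.1 with u | f <;> simp only [hu, Finset.mem_coe]
      · rw [hu] at hadj
        rw [tGraph_adj_inr_inl] at hadj
        have : u = a ∨ u = b := by rw [hab] at hadj; simpa using hadj
        have heinc : ∀ v : V, v ∈ (e : Sym2 V) →
            (e : Sym2 V) ∈ G.incidenceFinset v := fun v hv => by
          rw [SimpleGraph.mem_incidenceFinset]; exact ⟨e.2, hv⟩
        rcases this with rfl | rfl
        · exact Finset.mem_union_left _ (Finset.mem_image_of_mem _ (heinc _ hadj))
        · exact Finset.mem_union_right _ (Finset.mem_image_of_mem _ (heinc _ hadj))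
      · rw [hu] at hadj
        rw [tGraph_adj_inr_inr] at hadj
        obtain ⟨hne, u, hue, huf⟩ := hadj
        by_cases haf : a ∈ (f : Sym2 V)
        · simp only [haf, if_true]
          refine Finset.mem_union_left _ (Finset.mem_image_of_mem _ ?_)
          rw [SimpleGraph.mem_incidenceFinset]; exact ⟨f.2, haf⟩
        · simp only [haf, if_false]
          refine Finset.mem_union_right _ (Finset.mem_image_of_mem _ ?_)
          rw [SimpleGraph.mem_incidenceFinset]
          refine ⟨f.2, ?_⟩
          have : u = a ∨ u = b := by rw [hab] at hue; simpa using hue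
          rcases this with rfl | rfl
          · exact absurd huf haf
          · exact huf
    · -- injective on the filter
      intro q hq q' hq' heq
      rw [Finset.mem_coe, Finset.mem_filter] at hq hq'
      have hadj := hq.2; rw [tSum, fSum_adj_inr] at hadj
      have hadj' := hq'.2; rw [tSum, fSum_adj_inr] at hadj'
      simp only at heq
      have h1 : q.1 = q'.1 := by
        rcases h1 : q.1 with u | f <;> rcases h1' : q'.1 with u' | f' <;>
          rw [h1, h1'] at heq
        · simpa using congrArg Prod.fst heq
        · exfalso
          rw [h1'] at hadj'
          rw [tGraph_adj_inr_inr] at hadj'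
          have : (e : Sym2 V) = (f' : Sym2 V) := by simpa using congrArg Prod.snd heq
          exact hadj'.2.1 (Subtype.ext this.symm).symm
        · exfalso
          rw [h1] at hadj
          rw [tGraph_adj_inr_inr] at hadj
          have : (f : Sym2 V) = (e : Sym2 V) := by simpa using congrArg Prod.snd heq
          exact hadj.2.1 (Subtype.ext this).symm
        · have : (f : Sym2 V) = (f' : Sym2 V) := by simpa using congrArg Prod.snd heq
          rw [Subtype.ext this]
      exact Prod.ext h1 (hadj.1.trans hadj'.1.symm)
  · -- all vertices of s lie in the G-layer: Cartesian-product argument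
    push_neg at hE
    have hinl : ∀ p ∈ s, ∃ u : V, p.1 = Sum.inl u := by
      intro p hp
      rcases h1 : p.1 with u | f
      · exact ⟨u, rfl⟩
      · exact absurd (Prod.ext h1 rfl : p = (Sum.inr f, p.2)) (hE p hp f p.2)
    set A : Finset V := Finset.univ.filter fun u => ∃ w : W, (Sum.inl u, w) ∈ s with hA
    have hAmem : ∀ u : V, u ∈ A ↔ ∃ w : W, (Sum.inl u, w) ∈ s := by
      intro u; simp [hA]
    have hAne : A.Nonempty := by
      obtain ⟨p, hp⟩ := hs
      obtain ⟨u, hu⟩ := hinl p hp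
      exact ⟨u, (hAmem u).mpr ⟨p.2, by rw [← hu]; exact hp⟩⟩
    obtain ⟨u, huA, hku⟩ := hG A hAne
    set B : Finset W := Finset.univ.filter fun w => (Sum.inl u, w) ∈ s with hB
    have hBmem : ∀ w : W, w ∈ B ↔ (Sum.inl u, w) ∈ s := by
      intro w; simp [hB]
    have hBne : B.Nonempty := by
      obtain ⟨w, hw⟩ := (hAmem u).mp huA
      exact ⟨w, (hBmem w).mpr hw⟩
    obtain ⟨w, hwB, hlw⟩ := hH B hBne
    refine ⟨(Sum.inl u, w), (hBmem w).mp hwB, ?_⟩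
    have hsub : (s.filter fun q => (tSum G H).Adj (Sum.inl u, w) q) ⊆
        ((A.filter fun u' => G.Adj u u').image fun u' => ((Sum.inl u' : V ⊕ G.edgeSet), w)) ∪
          ((B.filter fun w' => H.Adj w w').image fun w' => ((Sum.inl u : V ⊕ G.edgeSet), w')) := by
      intro q hq
      rw [Finset.mem_filter] at hq
      obtain ⟨hqs, hadj⟩ := hq
      rw [tSum, fSum_adj_inl] at hadj
      rcases hadj with ⟨h1, h2⟩ | ⟨h1, h2⟩
      · refine Finset.mem_union_right _ ?_
        rw [Finset.mem_image]
        refine ⟨q.2, ?_, ?_⟩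
        · rw [Finset.mem_filter]
          exact ⟨(hBmem q.2).mpr (by rw [← h1]; exact (by simpa using hqs)), h2⟩
        · rw [← h1]
      · refine Finset.mem_union_left _ ?_
        obtain ⟨u', hu'⟩ := hinl q hqs
        rw [hu', tGraph_adj_inl_inl] at h2
        rw [Finset.mem_image]
        refine ⟨u', ?_, ?_⟩
        · rw [Finset.mem_filter]
          refine ⟨(hAmem u').mpr ⟨q.2, by rw [← hu']; simpa using hqs⟩, h2⟩
        · rw [← hu', ← h1]
    calc (s.filter fun q => (tSum G H).Adj (Sum.inl u, w) q).card
        ≤ _ := Finset.card_le_card hsub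
      _ ≤ ((A.filter fun u' => G.Adj u u').image fun u' => ((Sum.inl u' : V ⊕ G.edgeSet), w)).card
            + ((B.filter fun w' => H.Adj w w').image fun w' => ((Sum.inl u : V ⊕ G.edgeSet), w')).card :=
          Finset.card_union_le _ _
      _ ≤ (A.filter fun u' => G.Adj u u').card + (B.filter fun w' => H.Adj w w').card :=
          Nat.add_le_add Finset.card_image_le Finset.card_image_le
      _ ≤ k + l := Nat.add_le_add hku hlw
      _ ≤ max (2 * G.maxDegree) (k + l) := le_max_right _ _
end

section
/- For every integer n ≥ 4, the subdivision graph S(K_n) of the complete graph K_n satisfies AT(S(K_n)) = 3. -/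
open scoped Classical

private lemma card_eq_sum_outdeg {V : Type*} [Fintype V] (B : Finset (V × V)) :
    B.card = ∑ v, arcOutDeg B v := by
  classical
  rw [Finset.card_eq_sum_card_fiberwise
    (f := fun p : V × V => p.1) (t := Finset.univ) (fun p _ => Finset.mem_univ p.1)]
  exact Finset.sum_congr rfl fun v _ => rfl

private lemma subdiv_adj_iff {V : Type*} (G : SimpleGraph V) (a b : V ⊕ ↥G.edgeSet) :
    (subdivisionGraph G).Adj a b ↔
      (∃ u e, a = Sum.inl u ∧ b = Sum.inr e ∧ u ∈ (e : Sym2 V)) ∨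
      (∃ u e, a = Sum.inr e ∧ b = Sum.inl u ∧ u ∈ (e : Sym2 V)) := by
  show (SimpleGraph.fromRel _).Adj a b ↔ _
  rw [SimpleGraph.fromRel_adj]
  rcases a with u | e <;> rcases b with v | f <;> simp

/-- `AT(S(K_n)) = 3` for every `n ≥ 4`. -/
theorem stmt19 (n : ℕ) (hn : 4 ≤ n) :
    alonTarsiNumber (subdivisionGraph (SimpleGraph.completeGraph (Fin n))) = 3 := by
  classical
  set G := SimpleGraph.completeGraph (Fin n) with hG
  set S := subdivisionGraph G with hSdef
  -- the witness orientation: all arcs from subdivision vertices to original vertices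
  set A : Finset ((Fin n ⊕ ↥G.edgeSet) × (Fin n ⊕ ↥G.edgeSet)) :=
    Finset.univ.filter (fun p => S.Adj p.1 p.2 ∧ ∃ e, p.1 = Sum.inr e) with hA
  have hmemA : ∀ p, p ∈ A ↔ S.Adj p.1 p.2 ∧ ∃ e, p.1 = Sum.inr e := by
    intro p; simp [hA]
  have horient : IsOrientation S A := by
    constructor
    · intro a ha; exact ((hmemA a).1 ha).1
    · intro u v huv
      rw [hmemA, hmemA]
      rcases (subdiv_adj_iff G u v).1 huv with ⟨a, e, rfl, rfl, hm⟩ | ⟨a, e, rfl, rfl, hm⟩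
      · simp [huv.symm]
      · simp [huv]
  have houtdeg : ∀ v, arcOutDeg A v < 3 := by
    intro v
    rcases v with u | e
    · have h0 : arcOutDeg A (Sum.inl u) = 0 := by
        rw [arcOutDeg, Finset.card_eq_zero]
        ext p
        simp only [Finset.mem_filter, Finset.notMem_empty, iff_false, not_and]
        intro hp hp1
        obtain ⟨e, he⟩ := ((hmemA p).1 hp).2
        rw [hp1] at he
        exact absurd he (by simp)
      omega
    · obtain ⟨x, y, hxy⟩ : ∃ x y, (e : Sym2 (Fin n)) = s(x, y) := by
        induction (e : Sym2 (Fin n)) using Sym2.ind with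
        | _ x y => exact ⟨x, y, rfl⟩
      have h2 : arcOutDeg A (Sum.inr e) ≤
          ({(Sum.inr e, Sum.inl x), (Sum.inr e, Sum.inl y)} :
            Finset ((Fin n ⊕ ↥G.edgeSet) × (Fin n ⊕ ↥G.edgeSet))).card := by
        rw [arcOutDeg]
        apply Finset.card_le_card
        intro p hp
        simp only [Finset.mem_filter] at hp
        obtain ⟨hpA, hp1⟩ := hp
        have hadj := ((hmemA p).1 hpA).1
        rcases (subdiv_adj_iff G p.1 p.2).1 hadj with ⟨a, f, h1, hb, hm⟩ | ⟨a, f, h1, hb, hm⟩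
        · rw [hp1] at h1; exact absurd h1 (by simp)
        · rw [hp1] at h1
          have hfe : f = e := by simpa using h1.symm
          subst hfe
          rw [hxy, Sym2.mem_iff] at hm
          rw [Finset.mem_insert, Finset.mem_singleton]
          rcases hm with rfl | rfl
          · exact Or.inl (Prod.ext hp1 hb)
          · exact Or.inr (Prod.ext hp1 hb)
      have h4 : ({(Sum.inr e, Sum.inl x), (Sum.inr e, Sum.inl y)} :
          Finset ((Fin n ⊕ ↥G.edgeSet) × (Fin n ⊕ ↥G.edgeSet))).card ≤ 2 :=
        (Finset.card_insert_le _ _).trans (by simp)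
      omega
  have heul : ∀ B ∈ A.powerset, IsEulerianSub B → B = ∅ := by
    intro B hB hEu
    rw [Finset.mem_powerset] at hB
    by_contra hne
    obtain ⟨p, hp⟩ := Finset.nonempty_iff_ne_empty.2 hne
    have hpA := hB hp
    have hadj := ((hmemA p).1 hpA).1
    obtain ⟨f, hf⟩ := ((hmemA p).1 hpA).2
    rcases (subdiv_adj_iff G p.1 p.2).1 hadj with ⟨a, g, h1, h2, hm⟩ | ⟨a, g, h1, h2, hm⟩
    · rw [hf] at h1; exact absurd h1 (by simp)
    · have hout : arcOutDeg B (Sum.inl a) = 0 := by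
        rw [arcOutDeg, Finset.card_eq_zero]
        ext q
        simp only [Finset.mem_filter, Finset.notMem_empty, iff_false, not_and]
        intro hq hq1
        obtain ⟨g', hg'⟩ := ((hmemA q).1 (hB hq)).2
        rw [hq1] at hg'
        exact absurd hg' (by simp)
      have hin : 0 < arcInDeg B (Sum.inl a) := by
        rw [arcInDeg]
        refine Finset.card_pos.2 ⟨p, ?_⟩
        simp only [Finset.mem_filter]
        exact ⟨hp, h2⟩
      have := hEu (Sum.inl a)
      omega
  have hAT : IsATOrientation A := by
    have hodd : (A.powerset.filter fun B => IsEulerianSub B ∧ ¬ Even B.card) = ∅ := by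
      ext B
      simp only [Finset.mem_filter, Finset.notMem_empty, iff_false, not_and]
      intro hB hE hOdd
      rw [heul B hB hE] at hOdd
      simp at hOdd
    have heven : (∅ : Finset _) ∈ A.powerset.filter fun B => IsEulerianSub B ∧ Even B.card := by
      refine Finset.mem_filter.2 ⟨Finset.empty_mem_powerset _, ?_, by simp⟩
      intro v; simp [arcInDeg, arcOutDeg]
    rw [IsATOrientation, hodd]
    simp only [Finset.card_empty]
    exact Finset.card_ne_zero_of_mem heven
  have h3 : 3 ∈ {k : ℕ | ∃ A, IsOrientation S A ∧ IsATOrientation A ∧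
      ∀ v, arcOutDeg A v < k} := ⟨A, horient, hAT, houtdeg⟩
  -- lower bound
  have hElarge : n < Fintype.card ↥G.edgeSet := by
    have hE : Fintype.card ↥G.edgeSet = n.choose 2 := by
      have h := SimpleGraph.card_edgeFinset_top_eq_card_choose_two (V := Fin n)
      rw [SimpleGraph.edgeFinset_card, Fintype.card_fin] at h
      convert h using 2
    rw [hE]
    obtain ⟨m, rfl⟩ : ∃ m, n = m + 4 := ⟨n - 4, by omega⟩
    have hev : Even ((m + 4) * (m + 3)) := by
      rw [mul_comm]; exact Nat.even_mul_succ_self (m + 3)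
    have h2 : 2 * ((m + 4) * (m + 3) / 2) = (m + 4) * (m + 3) :=
      Nat.mul_div_cancel' hev.two_dvd
    have h3' : 3 * (m + 4) ≤ (m + 4) * (m + 3) := by
      rw [mul_comm 3 (m + 4)]
      exact Nat.mul_le_mul_left _ (by omega)
    have hc : (m + 4).choose 2 = (m + 4) * (m + 3) / 2 := by
      rw [Nat.choose_two_right]
      norm_num
    omega
  have hlow : ∀ k ∈ {k : ℕ | ∃ A, IsOrientation S A ∧ IsATOrientation A ∧
      ∀ v, arcOutDeg A v < k}, 3 ≤ k := by
    intro k hk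
    by_contra hlt
    push_neg at hlt
    obtain ⟨B, hBor, _, hBdeg⟩ := hk
    have hd1 : ∀ v, arcOutDeg B v ≤ 1 := fun v => by have := hBdeg v; omega
    have hcard : B.card ≤ Fintype.card (Fin n ⊕ ↥G.edgeSet) := by
      rw [card_eq_sum_outdeg]
      calc ∑ v, arcOutDeg B v ≤ ∑ _v : (Fin n ⊕ ↥G.edgeSet), 1 :=
            Finset.sum_le_sum (fun v _ => hd1 v)
        _ = Fintype.card _ := by simp
    set P : Finset (Fin n × ↥G.edgeSet) :=
      Finset.univ.filter (fun p => p.1 ∈ (p.2 : Sym2 (Fin n))) with hP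
    have hPB : P.card ≤ B.card := by
      apply Finset.card_le_card_of_injOn
        (fun p => if (Sum.inl p.1, Sum.inr p.2) ∈ B then (Sum.inl p.1, Sum.inr p.2)
          else (Sum.inr p.2, Sum.inl p.1))
      · intro p hp
        have hm : p.1 ∈ (p.2 : Sym2 (Fin n)) := by
          have := Finset.mem_filter.1 hp; exact this.2
        have hadj : S.Adj (Sum.inl p.1) (Sum.inr p.2) := by
          rw [subdiv_adj_iff]; exact Or.inl ⟨p.1, p.2, rfl, rfl, hm⟩
        beta_reduce
        split_ifs with h
        · exact h
        · by_contra hc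
          exact h ((hBor.2 _ _ hadj).2 hc)
      · intro p hp q hq h
        beta_reduce at h
        split_ifs at h <;>
          simp only [Prod.mk.injEq, Sum.inl.injEq, Sum.inr.injEq, and_false, false_and,
            reduceCtorEq] at h
        · exact Prod.ext h.1 h.2
        · exact Prod.ext h.2 h.1
    have hPcard : P.card = 2 * Fintype.card ↥G.edgeSet := by
      rw [Finset.card_eq_sum_card_fiberwise
        (f := fun p : Fin n × ↥G.edgeSet => p.2) (fun p _ => Finset.mem_univ p.2)]
      have hfib : ∀ e : ↥G.edgeSet, (P.filter fun p => p.2 = e).card = 2 := by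
        intro e
        obtain ⟨x, y, hxy⟩ : ∃ x y, (e : Sym2 (Fin n)) = s(x, y) := by
          induction (e : Sym2 (Fin n)) using Sym2.ind with
          | _ x y => exact ⟨x, y, rfl⟩
        have hne : x ≠ y := by
          have he := e.prop
          rw [hxy] at he
          exact (SimpleGraph.mem_edgeSet G).1 he |>.ne
        have : (P.filter fun p => p.2 = e) = {(x, e), (y, e)} := by
          ext ⟨u, f⟩
          simp only [hP, Finset.mem_filter, Finset.mem_univ, true_and,
            Finset.mem_insert, Finset.mem_singleton, Prod.mk.injEq]
          constructor
          · rintro ⟨hu, rfl⟩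
            rw [hxy, Sym2.mem_iff] at hu
            rcases hu with rfl | rfl
            · exact Or.inl ⟨rfl, rfl⟩
            · exact Or.inr ⟨rfl, rfl⟩
          · rintro (⟨rfl, rfl⟩ | ⟨rfl, rfl⟩)
            · exact ⟨by rw [hxy, Sym2.mem_iff]; exact Or.inl rfl, rfl⟩
            · exact ⟨by rw [hxy, Sym2.mem_iff]; exact Or.inr rfl, rfl⟩
        rw [this, Finset.card_pair (by simp [hne])]
      rw [Finset.sum_congr rfl (fun e _ => hfib e)]
      simp [mul_comm]
    have hVcard : Fintype.card (Fin n ⊕ ↥G.edgeSet) = n + Fintype.card ↥G.edgeSet := by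
      simp
    omega
  rw [alonTarsiNumber]
  exact le_antisymm (Nat.sInf_le h3) (le_csInf ⟨3, h3⟩ hlow)
end
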